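/- If G is a continuous strictly increasing c.d.f. on ℝ with density g and (G_n) is a sequence of (random) distribution functions such that sup_{x∈ℝ} |G_n(x) − G(x)| → 0 in probability, then sup_{u∈(a,b)} |u − G(G_n⁻¹(u))| → 0 in probability for any 0 < a < b < 1, where G_n⁻¹ is the generalized inverse. -/

import Mathlib

open MeasureTheory Filter

theorem stmt_14 {Ω : Type*} [MeasurableSpace Ω] (P : Measure Ω) [IsProbabilityMeasure P]
    (G : ℝ → ℝ) (hG_cont : Continuous G) (hG_mono : StrictMono G)
    (hG_range : ∀ x, G x ∈ Set.Ioo (0 : ℝ) 1)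
    (hG_surj : ∀ u ∈ Set.Ioo (0 : ℝ) 1, ∃ x, G x = u)
    (Gn : ℕ → Ω → ℝ → ℝ)
    (hGn_mono : ∀ n ω, Monotone (Gn n ω))
    (hGn_range : ∀ n ω x, Gn n ω x ∈ Set.Icc (0 : ℝ) 1)
    (Gninv : ℕ → Ω → ℝ → ℝ)
    (hGninv : ∀ n ω u, Gninv n ω u = sInf {x : ℝ | u ≤ Gn n ω x})
    (hconv : ∀ ε > (0 : ℝ),
      Tendsto (fun n : ℕ => P {ω | ∃ x, ε ≤ |Gn n ω x - G x|}) atTop (nhds 0)) :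
    ∀ a b : ℝ, 0 < a → a < b → b < 1 →
      ∀ ε > (0 : ℝ), Tendsto (fun n : ℕ =>
        P {ω | ∃ u ∈ Set.Ioo a b, ε ≤ |u - G (Gninv n ω u)|}) atTop (nhds 0) := by
  intro a b ha hab hb1 ε hε
  set c : ℝ := min ε (min a (1 - b)) with hc
  have hc0 : 0 < c := by
    simp only [hc, lt_min_iff]
    exact ⟨hε, ha, by linarith⟩
  have hcε : c ≤ ε := min_le_left _ _
  have hca : c ≤ a := le_trans (min_le_right _ _) (min_le_left _ _)
  have hcb : c ≤ 1 - b := le_trans (min_le_right _ _) (min_le_right _ _)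
  -- key deterministic inclusion
  have key : ∀ n : ℕ,
      {ω : Ω | ∃ u ∈ Set.Ioo a b, ε ≤ |u - G (Gninv n ω u)|}
        ⊆ {ω : Ω | ∃ x, c / 4 ≤ |Gn n ω x - G x|} := by
    intro n ω hω
    by_contra hnot
    have hnot' : ∀ x, |Gn n ω x - G x| < c / 4 :=
      fun x => lt_of_not_ge fun h => hnot ⟨x, h⟩
    obtain ⟨u, hu, hεu⟩ := hω
    -- bounds on u
    have hu01 : u ∈ Set.Ioo (0 : ℝ) 1 := ⟨lt_trans ha hu.1, lt_trans hu.2 hb1⟩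
    have h1 : (0 : ℝ) < u - c / 2 := by
      have := hu.1; linarith
    have h2 : u + c / 2 < 1 := by
      have := hu.2; linarith
    obtain ⟨x1, hx1⟩ := hG_surj (u + c / 2) ⟨by linarith [hu01.1], h2⟩
    obtain ⟨x2, hx2⟩ := hG_surj (u - c / 2) ⟨h1, by linarith [hu01.2]⟩
    set S : Set ℝ := {x : ℝ | u ≤ Gn n ω x} with hS
    have hx1S : x1 ∈ S := by
      have h := hnot' x1
      have habs : G x1 - Gn n ω x1 ≤ |Gn n ω x1 - G x1| := by
        rw [abs_sub_comm]; exact le_abs_self _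
      show u ≤ Gn n ω x1
      linarith [hx1 ▸ (by linarith : G x1 - c / 4 ≤ Gn n ω x1)]
    have hlb : ∀ x ∈ S, x2 ≤ x := by
      intro x hx
      by_contra hlt
      push_neg at hlt
      have hGx : G x < G x2 := hG_mono hlt
      have h := hnot' x
      have habs : Gn n ω x - G x ≤ |Gn n ω x - G x| := le_abs_self _
      rw [hx2] at hGx
      have hlt2 : Gn n ω x < u := by linarith
      exact absurd hx (by simpa [hS] using not_le.mpr hlt2)
    have hbdd : BddBelow S := ⟨x2, hlb⟩
    have hinf_le : sInf S ≤ x1 := csInf_le hbdd hx1S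
    have hle_inf : x2 ≤ sInf S := le_csInf ⟨x1, hx1S⟩ hlb
    have hup : G (Gninv n ω u) ≤ u + c / 2 := by
      rw [hGninv, ← hS, ← hx1]
      exact hG_mono.monotone hinf_le
    have hlow : u - c / 2 ≤ G (Gninv n ω u) := by
      rw [hGninv, ← hS, ← hx2]
      exact hG_mono.monotone hle_inf
    have : |u - G (Gninv n ω u)| ≤ c / 2 := abs_le.mpr ⟨by linarith, by linarith⟩
    linarith [hεu, hc0, hcε]
  have hδ : (0 : ℝ) < c / 4 := by linarith
  exact tendsto_of_tendsto_of_tendsto_of_le_of_le tendsto_const_nhds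
    (hconv (c / 4) hδ) (fun n => zero_le) (fun n => measure_mono (key n))
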